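/- Let $a_n,b_n:\mathbb{R}\to\mathbb{R}$ be differentiable solutions of the Toda lattice with $a_n(t)\neq 0$ for all $n,t$, let $\lambda\in\mathbb{R}$, and let $P_n(t)$, $Q_n(t)$ ($n\in\mathbb{Z}$) be the solutions of the recurrence $a_{n-1}(t)y_{n-1}+b_n(t)y_n+a_n(t)y_{n+1}=\lambda y_n$ with $P_{-1}(t)=0$, $P_0(t)=1$ and $Q_0(t)=0$, $Q_1(t)=1/a_0(t)$. Then for every $n\in\mathbb{Z}$ and every $t$: $\frac{d}{dt}P_n - \big(\tfrac12 a_n P_{n+1}-\tfrac12 a_{n-1}P_{n-1}\big) = \frac{b_0(t)-\lambda}{2}\,P_n + a_{-1}(t)^2\,Q_n$. -/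

import Mathlib

/-- The "remainder" function: `d/dt Pₙ - (A P)ₙ - ((b₀-λ)/2) Pₙ - a₋₁² Qₙ`. -/
noncomputable def todaR (a b : ℤ → ℝ → ℝ) (lam : ℝ) (P Q : ℤ → ℝ → ℝ) (m : ℤ) (t : ℝ) : ℝ :=
  deriv (P m) t - (1 / 2 * a m t * P (m + 1) t - 1 / 2 * a (m - 1) t * P (m - 1) t)
    - (b 0 t - lam) / 2 * P m t - (a (-1) t) ^ 2 * Q m t

/-- For Toda flows, the polynomial solution `Pₙ(λ,t)` of the Jacobi eigenvalue equation
(normalized by `P₋₁ = 0`, `P₀ = 1`) satisfies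
`d/dt Pₙ - (½ aₙ Pₙ₊₁ - ½ aₙ₋₁ Pₙ₋₁) = ((b₀ - λ)/2) Pₙ + a₋₁² Qₙ`. -/
theorem P_evolution_under_toda_flow
    (a b : ℤ → ℝ → ℝ)
    (ha : ∀ n : ℤ, Differentiable ℝ (a n))
    (hb : ∀ n : ℤ, Differentiable ℝ (b n))
    (htoda : ∀ (n : ℤ) (t : ℝ),
      deriv (a n) t = a n t / 2 * (b (n + 1) t - b n t) ∧
      deriv (b n) t = (a n t) ^ 2 - (a (n - 1) t) ^ 2)
    (hane : ∀ (n : ℤ) (t : ℝ), a n t ≠ 0)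
    (lam : ℝ)
    (P Q : ℤ → ℝ → ℝ)
    (hP : ∀ n : ℤ, Differentiable ℝ (P n))
    (hQ : ∀ n : ℤ, Differentiable ℝ (Q n))
    (hPrec : ∀ (n : ℤ) (t : ℝ),
      a (n - 1) t * P (n - 1) t + b n t * P n t + a n t * P (n + 1) t = lam * P n t)
    (hQrec : ∀ (n : ℤ) (t : ℝ),
      a (n - 1) t * Q (n - 1) t + b n t * Q n t + a n t * Q (n + 1) t = lam * Q n t)
    (hPinit : ∀ t : ℝ, P (-1) t = 0 ∧ P 0 t = 1)
    (hQinit : ∀ t : ℝ, Q 0 t = 0 ∧ Q 1 t = 1 / a 0 t) :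
    ∀ (n : ℤ) (t : ℝ),
      deriv (P n) t - ((1 / 2) * a n t * P (n + 1) t - (1 / 2) * a (n - 1) t * P (n - 1) t) =
        (b 0 t - lam) / 2 * P n t + (a (-1) t) ^ 2 * Q n t := by
  -- derivative of the recurrence
  have hder : ∀ (m : ℤ) (s : ℝ),
      deriv (a (m - 1)) s * P (m - 1) s + a (m - 1) s * deriv (P (m - 1)) s
        + (deriv (b m) s * P m s + b m s * deriv (P m) s)
        + (deriv (a m) s * P (m + 1) s + a m s * deriv (P (m + 1)) s)
        = lam * deriv (P m) s := by
    intro m s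
    have h1 : HasDerivAt
        (fun u => a (m - 1) u * P (m - 1) u + b m u * P m u + a m u * P (m + 1) u)
        (deriv (a (m - 1)) s * P (m - 1) s + a (m - 1) s * deriv (P (m - 1)) s
          + (deriv (b m) s * P m s + b m s * deriv (P m) s)
          + (deriv (a m) s * P (m + 1) s + a m s * deriv (P (m + 1)) s)) s :=
      ((((ha (m - 1)) s).hasDerivAt.mul ((hP (m - 1)) s).hasDerivAt).add
        (((hb m) s).hasDerivAt.mul ((hP m) s).hasDerivAt)).add
        (((ha m) s).hasDerivAt.mul ((hP (m + 1)) s).hasDerivAt)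
    have h2 : HasDerivAt (fun u => lam * P m u) (lam * deriv (P m) s) s :=
      ((hP m) s).hasDerivAt.const_mul lam
    have heq : (fun u => a (m - 1) u * P (m - 1) u + b m u * P m u + a m u * P (m + 1) u)
        = fun u => lam * P m u := funext fun u => hPrec m u
    rw [heq] at h1
    exact h1.unique h2
  -- the remainder function satisfies the same homogeneous recurrence
  have hRrec : ∀ (m : ℤ) (s : ℝ),
      a (m - 1) s * todaR a b lam P Q (m - 1) s + b m s * todaR a b lam P Q m s
        + a m s * todaR a b lam P Q (m + 1) s = lam * todaR a b lam P Q m s := by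
    intro m s
    have e1 := hder m s
    rw [(htoda (m - 1) s).1, (htoda m s).1, (htoda m s).2,
      show m - 1 + 1 = m by ring] at e1
    have e2 := hPrec m s
    have e3 := hPrec (m - 1) s
    rw [show m - 1 + 1 = m by ring] at e3
    have e4 := hPrec (m + 1) s
    rw [show m + 1 - 1 = m by ring] at e4
    have e5 := hQrec m s
    simp only [todaR, show m - 1 + 1 = m by ring, show m + 1 - 1 = m by ring]
    linear_combination e1 - ((b 0 s - lam) / 2) * e2 + (a (m - 1) s / 2) * e3
      - (a m s / 2) * e4 - (a (-1) s) ^ 2 * e5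
  -- derivative of the constant initial values
  have hP0 : P 0 = fun _ => (1 : ℝ) := funext fun s => (hPinit s).2
  have hPm1 : P (-1) = fun _ => (0 : ℝ) := funext fun s => (hPinit s).1
  have hD0 : ∀ s : ℝ, deriv (P 0) s = 0 := by rw [hP0]; simp
  have hDm1 : ∀ s : ℝ, deriv (P (-1)) s = 0 := by rw [hPm1]; simp
  -- the remainder vanishes everywhere
  have hzero : ∀ (m : ℤ) (s : ℝ), todaR a b lam P Q m s = 0 ∧ todaR a b lam P Q (m + 1) s = 0 := by
    intro m s
    induction m using Int.inductionOn' (b := -1) with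
    | zero =>
      constructor
      · -- R(-1) = 0
        have hp := hPrec (-1) s
        rw [show (-1 : ℤ) - 1 = -2 by ring, show (-1 : ℤ) + 1 = 0 by ring,
          (hPinit s).1, (hPinit s).2] at hp
        have hq := hQrec 0 s
        rw [show (0 : ℤ) - 1 = -1 by ring, show (0 : ℤ) + 1 = 1 by ring,
          (hQinit s).1, (hQinit s).2] at hq
        have ha0 : a 0 s * (1 / a 0 s) = 1 := by rw [mul_one_div, div_self (hane 0 s)]
        simp only [todaR, show (-1 : ℤ) + 1 = 0 by ring, show (-1 : ℤ) - 1 = -2 by ring,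
          hDm1 s, (hPinit s).1, (hPinit s).2]
        linear_combination (1 / 2) * hp - a (-1) s * hq + a (-1) s * ha0
      · -- R(0) = 0
        have hp := hPrec 0 s
        rw [show (0 : ℤ) - 1 = -1 by ring, show (0 : ℤ) + 1 = 1 by ring,
          (hPinit s).1, (hPinit s).2] at hp
        simp only [todaR, show (-1 : ℤ) + 1 = 0 by ring, show (0 : ℤ) - 1 = -1 by ring,
          show (0 : ℤ) + 1 = 1 by ring, hD0 s, (hPinit s).1, (hPinit s).2, (hQinit s).1]
        linear_combination (-1 / 2 : ℝ) * hp
    | succ k hk ih =>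
      refine ⟨ih.2, ?_⟩
      have h := hRrec (k + 1) s
      rw [show k + 1 - 1 = k by ring, ih.1, ih.2] at h
      have h' : a (k + 1) s * todaR a b lam P Q (k + 1 + 1) s = 0 := by linarith
      rcases mul_eq_zero.mp h' with h'' | h''
      · exact absurd h'' (hane (k + 1) s)
      · exact h''
    | pred k hk ih =>
      have h := hRrec k s
      rw [ih.1, ih.2] at h
      have h' : a (k - 1) s * todaR a b lam P Q (k - 1) s = 0 := by linarith
      have hR : todaR a b lam P Q (k - 1) s = 0 := by
        rcases mul_eq_zero.mp h' with h'' | h''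
        · exact absurd h'' (hane (k - 1) s)
        · exact h''
      refine ⟨hR, ?_⟩
      rw [show k - 1 + 1 = k by ring]
      exact ih.1
  intro n t
  have h := (hzero n t).1
  unfold todaR at h
  linarith
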